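/- Let g satisfy g(x) = x^α L_g(x) on (0,1] with α ∈ (−1/2,1/2)\{0} and L_g slowly varying at 0, continuously differentiable and bounded away from 0. For ε ∈ (0,1] define the truncated kernel g_ε(x) = g(ε) for x ∈ (0,ε], g_ε(x) = g(x) for x > ε. Then ∫_0^ε (g(s) − g(ε))² ds ∼ (1/(2α+1) − 2/(α+1) + 1) ε^{2α+1} L_g(ε)² as ε ↓ 0. -/

import Mathlib

open Real Filter Set MeasureTheory ENNReal

noncomputable def hfun (Lg : ℝ → ℝ) (u : ℝ) : ℝ := Real.log (Lg (Real.exp (-u)))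

lemma hfun_ptwise (Lg : ℝ → ℝ)
    (hslow : ∀ t : ℝ, 0 < t →
      Tendsto (fun x => Lg (t * x) / Lg x) (nhdsWithin 0 (Set.Ioi 0)) (nhds 1))
    (m : ℝ) (hm : 0 < m) (hmle : ∀ x ∈ Set.Ioc (0 : ℝ) 1, m ≤ Lg x)
    (s : ℝ) (hs : 0 ≤ s) :
    Tendsto (fun u => hfun Lg (u + s) - hfun Lg u) atTop (nhds 0) := by
  have hx : Tendsto (fun u : ℝ => Real.exp (-u)) atTop (nhdsWithin 0 (Set.Ioi 0)) := by
    rw [tendsto_nhdsWithin_iff]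
    constructor
    · exact Real.tendsto_exp_atBot.comp tendsto_neg_atTop_atBot
    · exact Eventually.of_forall fun u => Real.exp_pos _
  have h1 : Tendsto (fun u : ℝ => Lg (Real.exp (-s) * Real.exp (-u)) / Lg (Real.exp (-u)))
      atTop (nhds 1) := (hslow (Real.exp (-s)) (Real.exp_pos _)).comp hx
  have h2 : Tendsto (fun u : ℝ => Real.log (Lg (Real.exp (-(u + s))) / Lg (Real.exp (-u))))
      atTop (nhds 0) := by
    have := ((Real.continuousAt_log one_ne_zero).tendsto).comp h1
    rw [Real.log_one] at this
    refine this.congr fun u => ?_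
    simp only [Function.comp]
    rw [← Real.exp_add]
    ring_nf
  refine h2.congr' ?_
  filter_upwards [eventually_ge_atTop (0 : ℝ)] with u hu
  have e1 : Real.exp (-(u + s)) ∈ Set.Ioc (0 : ℝ) 1 :=
    ⟨Real.exp_pos _, Real.exp_le_one_iff.mpr (by linarith)⟩
  have e2 : Real.exp (-u) ∈ Set.Ioc (0 : ℝ) 1 :=
    ⟨Real.exp_pos _, Real.exp_le_one_iff.mpr (by linarith)⟩
  have p1 : (0:ℝ) < Lg (Real.exp (-(u + s))) := lt_of_lt_of_le hm (hmle _ e1)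
  have p2 : (0:ℝ) < Lg (Real.exp (-u)) := lt_of_lt_of_le hm (hmle _ e2)
  rw [Real.log_div p1.ne' p2.ne']
  rfl

lemma hfun_contOn (Lg : ℝ → ℝ) (hcont : ContinuousOn Lg (Set.Ioc (0:ℝ) 1))
    (m : ℝ) (hm : 0 < m) (hmle : ∀ x ∈ Set.Ioc (0 : ℝ) 1, m ≤ Lg x) :
    ContinuousOn (hfun Lg) (Set.Ici (0:ℝ)) := by
  have hmap : Set.MapsTo (fun u : ℝ => Real.exp (-u)) (Set.Ici (0:ℝ)) (Set.Ioc (0:ℝ) 1) := by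
    intro u hu
    exact ⟨Real.exp_pos _, Real.exp_le_one_iff.mpr (by simpa using hu)⟩
  have h1 : ContinuousOn (fun u : ℝ => Lg (Real.exp (-u))) (Set.Ici (0:ℝ)) :=
    hcont.comp ((Real.continuous_exp.comp continuous_neg).continuousOn) hmap
  exact h1.log fun u hu => (lt_of_lt_of_le hm (hmle _ (hmap hu))).ne'

lemma hfun_uct (Lg : ℝ → ℝ)
    (hptw : ∀ s : ℝ, 0 ≤ s → Tendsto (fun u => hfun Lg (u + s) - hfun Lg u) atTop (nhds 0))
    (hcont : ContinuousOn (hfun Lg) (Set.Ici (0:ℝ)))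
    (ε : ℝ) (hε : 0 < ε) :
    ∀ᶠ u in atTop, ∀ s ∈ Set.Icc (0:ℝ) 2, |hfun Lg (u + s) - hfun Lg u| < ε := by
  by_contra hcon
  rw [Filter.not_eventually] at hcon
  -- extract sequences u n ≥ n and s n
  have hseq : ∀ n : ℕ, ∃ u : ℝ, (n : ℝ) ≤ u ∧ ∃ s ∈ Set.Icc (0:ℝ) 2,
      ε ≤ |hfun Lg (u + s) - hfun Lg u| := by
    intro n
    obtain ⟨u, hu, hp⟩ := (frequently_atTop.mp hcon) (n : ℝ)
    push_neg at hp
    obtain ⟨s, hs, hps⟩ := hp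
    exact ⟨u, hu, s, hs, hps⟩
  choose u hun s hsmem hsbig using hseq
  set w : ℕ → ℝ := fun n => u n + s n with hw
  have hu0 : ∀ n, (0:ℝ) ≤ u n := fun n => le_trans (by positivity) (hun n)
  have hw0 : ∀ n, (0:ℝ) ≤ w n := fun n => add_nonneg (hu0 n) (hsmem n).1
  have hutop : Tendsto u atTop atTop :=
    tendsto_atTop_mono hun tendsto_natCast_atTop_atTop
  have hwtop : Tendsto w atTop atTop :=
    tendsto_atTop_mono (fun n => le_add_of_nonneg_right (hsmem n).1) hutop
  -- bad sets
  set S : (ℕ → ℝ) → ℕ → Set ℝ := fun v n =>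
    Set.Icc (0:ℝ) 4 ∩ (fun a => |hfun Lg (v n + a) - hfun Lg (v n)|) ⁻¹' Set.Ici (ε/2) with hS
  have hSclosed : ∀ (v : ℕ → ℝ), (∀ n, 0 ≤ v n) → ∀ n, IsClosed (S v n) := by
    intro v hv n
    apply ContinuousOn.preimage_isClosed_of_isClosed _ isClosed_Icc isClosed_Ici
    have : ContinuousOn (fun a : ℝ => hfun Lg (v n + a)) (Set.Icc (0:ℝ) 4) := by
      apply hcont.comp (by fun_prop)
      intro a ha
      exact add_nonneg (hv n) ha.1
    exact (this.sub continuousOn_const).abs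
  -- decreasing envelopes
  set E : (ℕ → ℝ) → ℕ → Set ℝ := fun v n => ⋃ k, S v (n + k) with hE
  have hEmeas : ∀ (v : ℕ → ℝ), (∀ n, 0 ≤ v n) → ∀ n, MeasurableSet (E v n) :=
    fun v hv n => MeasurableSet.iUnion fun k => (hSclosed v hv (n + k)).measurableSet
  have hEanti : ∀ v : ℕ → ℝ, Antitone (E v) := by
    intro v n1 n2 h12
    intro a ha
    obtain ⟨k, hk⟩ := Set.mem_iUnion.mp ha
    exact Set.mem_iUnion.mpr ⟨n2 + k - n1, by
      have : n1 + (n2 + k - n1) = n2 + k := by omega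
      rw [this]; exact hk⟩
  have hEempty : ∀ (v : ℕ → ℝ), (∀ n, 0 ≤ v n) → Tendsto v atTop atTop →
      (⋂ n, E v n) = ∅ := by
    intro v hv hvtop
    ext a
    simp only [Set.mem_iInter, Set.mem_empty_iff_false, iff_false]
    intro ha
    have ha0 : (0:ℝ) ≤ a := by
      obtain ⟨k, hk⟩ := Set.mem_iUnion.mp (ha 0)
      exact hk.1.1
    have hlim : Tendsto (fun n => hfun Lg (v n + a) - hfun Lg (v n)) atTop (nhds 0) :=
      (hptw a ha0).comp hvtop
    have hev : ∀ᶠ n in atTop, |hfun Lg (v n + a) - hfun Lg (v n)| < ε/2 := by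
      have := hlim.abs
      rw [abs_zero] at this
      exact this.eventually_lt_const (by linarith)
    obtain ⟨N, hN⟩ := eventually_atTop.mp hev
    obtain ⟨k, hk⟩ := Set.mem_iUnion.mp (ha N)
    exact absurd hk.2 (not_le.mpr (by simpa using hN (N + k) (by omega)))
  have hEtend : ∀ (v : ℕ → ℝ), (∀ n, 0 ≤ v n) → Tendsto v atTop atTop →
      Tendsto (fun n => volume (E v n)) atTop (nhds 0) := by
    intro v hv hvtop
    have hfin : volume (E v 0) ≠ ⊤ := by
      refine ne_of_lt (lt_of_le_of_lt (measure_mono (Set.iUnion_subset fun k =>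
        Set.inter_subset_left)) ?_)
      rw [Real.volume_Icc]
      exact ENNReal.ofReal_lt_top
    have h1 := tendsto_measure_iInter_atTop
      (fun n => (hEmeas v hv n).nullMeasurableSet) (hEanti v) ⟨0, hfin⟩
    rw [hEempty v hv hvtop] at h1
    simpa [Function.comp_def] using h1
  -- choose a good index n
  have hhalf : (0:ℝ≥0∞) < ENNReal.ofReal (1/2) := by simp
  have hev1 := (hEtend u hu0 hutop).eventually_lt_const hhalf
  have hev2 := (hEtend w hw0 hwtop).eventually_lt_const hhalf
  obtain ⟨n, h1, h2⟩ := (hev1.and hev2).exists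
  -- the translated bad set
  set B : Set ℝ := S u n ∪ (fun a => a + -(s n)) ⁻¹' (S w n) with hB
  have hBmeas : volume B ≤ ENNReal.ofReal (1/2) + ENNReal.ofReal (1/2) := by
    refine le_trans (measure_union_le _ _) ?_
    gcongr
    · exact le_of_lt (lt_of_le_of_lt (measure_mono
        (by simpa using Set.subset_iUnion (fun k => S u (n + k)) 0)) h1)
    · rw [measure_preimage_add_right]
      exact le_of_lt (lt_of_le_of_lt (measure_mono
        (by simpa using Set.subset_iUnion (fun k => S w (n + k)) 0)) h2)
  -- find a point in Icc (s n) (s n + 2) outside B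
  have hIvol : volume (Set.Icc (s n) (s n + 2)) = ENNReal.ofReal 2 := by
    rw [Real.volume_Icc]; norm_num
  have hgood : (Set.Icc (s n) (s n + 2) \ B).Nonempty := by
    rw [Set.nonempty_iff_ne_empty]
    intro hempty
    have h3 : volume (Set.Icc (s n) (s n + 2)) ≤ volume (Set.Icc (s n) (s n + 2) \ B) + volume B :=
      le_trans (measure_mono (Set.subset_diff_union _ _)) (measure_union_le _ _)
    rw [hempty, hIvol] at h3
    simp only [measure_empty, zero_add] at h3
    have h4 : ENNReal.ofReal 2 ≤ ENNReal.ofReal (1/2) + ENNReal.ofReal (1/2) := le_trans h3 hBmeas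
    rw [← ENNReal.ofReal_add (by norm_num) (by norm_num)] at h4
    have := ENNReal.ofReal_le_ofReal_iff (by norm_num : (0:ℝ) ≤ 1/2 + 1/2) |>.mp h4
    linarith
  obtain ⟨a, haI, haB⟩ := hgood
  have ha04 : a ∈ Set.Icc (0:ℝ) 4 := ⟨le_trans (hsmem n).1 haI.1, by
    have := (hsmem n).2; have := haI.2; linarith⟩
  have ha04' : a - s n ∈ Set.Icc (0:ℝ) 4 :=
    ⟨by linarith [haI.1], by linarith [haI.2, (hsmem n).1]⟩
  have hnot1 : a ∉ S u n := fun h => haB (Or.inl h)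
  have hnot2 : a - s n ∉ S w n := fun h => haB (Or.inr (by
    simpa [sub_eq_add_neg] using h))
  have hb1 : |hfun Lg (u n + a) - hfun Lg (u n)| < ε/2 := by
    by_contra hc
    exact hnot1 ⟨ha04, not_lt.mp (by simpa using hc)⟩
  have hb2 : |hfun Lg (w n + (a - s n)) - hfun Lg (w n)| < ε/2 := by
    by_contra hc
    exact hnot2 ⟨ha04', not_lt.mp (by simpa using hc)⟩
  have key : w n + (a - s n) = u n + a := by rw [hw]; ring
  rw [key] at hb2
  have : |hfun Lg (u n + s n) - hfun Lg (u n)| < ε := by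
    calc |hfun Lg (u n + s n) - hfun Lg (u n)|
        = |(hfun Lg (u n + a) - hfun Lg (u n)) - (hfun Lg (u n + a) - hfun Lg (w n))| := by
          rw [hw]; ring_nf
      _ ≤ |hfun Lg (u n + a) - hfun Lg (u n)| + |hfun Lg (u n + a) - hfun Lg (w n)| :=
          abs_sub _ _
      _ < ε/2 + ε/2 := by
          exact add_lt_add hb1 hb2
      _ = ε := by ring
  exact absurd (hsbig n) (not_le.mpr this)

lemma hfun_potter (Lg : ℝ → ℝ)
    (huct : ∀ ε : ℝ, 0 < ε → ∀ᶠ u in atTop, ∀ s ∈ Set.Icc (0:ℝ) 2,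
      |hfun Lg (u + s) - hfun Lg u| < ε)
    (δ : ℝ) (hδ : 0 < δ) :
    ∃ U : ℝ, 0 ≤ U ∧ ∀ u, U ≤ u → ∀ t, 0 ≤ t →
      |hfun Lg (u + t) - hfun Lg u| ≤ δ * (t + 1) := by
  obtain ⟨U0, hU0⟩ := eventually_atTop.mp (huct δ hδ)
  refine ⟨max U0 0, le_max_right _ _, ?_⟩
  have step : ∀ u, max U0 0 ≤ u → ∀ s ∈ Set.Icc (0:ℝ) 2,
      |hfun Lg (u + s) - hfun Lg u| ≤ δ :=
    fun u hu s hs => le_of_lt (hU0 u (le_trans (le_max_left _ _) hu) s hs)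
  have ind : ∀ n : ℕ, ∀ u, max U0 0 ≤ u → ∀ t : ℝ, 0 ≤ t → t ≤ 2*((n:ℝ)+1) →
      |hfun Lg (u + t) - hfun Lg u| ≤ δ * ((n:ℝ)+1) := by
    intro n
    induction n with
    | zero =>
      intro u hu t ht ht2
      exact step u hu t ⟨ht, by push_cast at ht2; linarith⟩ |>.trans (by norm_num)
    | succ n ih =>
      intro u hu t ht ht2
      by_cases hcase : t ≤ 2*(n+1)
      · refine le_trans (ih u hu t ht (by push_cast; push_cast at hcase; linarith)) ?_
        push_cast
        nlinarith [Nat.cast_nonneg (α := ℝ) n]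
      · push_neg at hcase
        have h2n : (0:ℝ) ≤ 2*(n+1) := by positivity
        have key : hfun Lg (u + t) - hfun Lg u
            = (hfun Lg ((u + 2) + (t - 2)) - hfun Lg (u + 2)) + (hfun Lg (u + 2) - hfun Lg u) := by
          ring_nf
        have hb1 : |hfun Lg ((u + 2) + (t - 2)) - hfun Lg (u + 2)| ≤ δ * (n+1) := by
          apply ih (u + 2) (by linarith) (t - 2) (by push_cast at hcase; linarith)
          push_cast at ht2 ⊢
          linarith
        have hb2 : |hfun Lg (u + 2) - hfun Lg u| ≤ δ :=
          step u hu 2 ⟨by norm_num, le_refl _⟩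
        calc |hfun Lg (u + t) - hfun Lg u|
            ≤ |hfun Lg ((u + 2) + (t - 2)) - hfun Lg (u + 2)| + |hfun Lg (u + 2) - hfun Lg u| := by
              rw [key]; exact abs_add_le _ _
          _ ≤ δ * (n+1) + δ := add_le_add hb1 hb2
          _ = δ * ((n:ℕ).succ + 1) := by push_cast; ring
  intro u hu t ht
  have hn := Nat.lt_floor_add_one (t/2)
  have hn' : (⌊t/2⌋₊ : ℝ) ≤ t/2 := Nat.floor_le (by linarith)
  have := ind ⌊t/2⌋₊ u hu t ht (by push_cast; linarith)
  refine le_trans this ?_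
  have : (⌊t/2⌋₊ : ℝ) + 1 ≤ t + 1 := by linarith
  nlinarith

lemma ratio_potter (Lg : ℝ → ℝ)
    (m : ℝ) (hm : 0 < m) (hmle : ∀ x ∈ Set.Ioc (0 : ℝ) 1, m ≤ Lg x)
    (δ : ℝ) (hδ : 0 < δ)
    (U : ℝ) (hU0 : 0 ≤ U)
    (hP : ∀ u, U ≤ u → ∀ t, 0 ≤ t → |hfun Lg (u + t) - hfun Lg u| ≤ δ * (t + 1)) :
    ∀ x ∈ Set.Ioc (0:ℝ) (Real.exp (-U)), ∀ y ∈ Set.Ioc (0:ℝ) 1,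
      Lg (y * x) / Lg x ≤ Real.exp δ * y ^ (-δ) := by
  intro x hx y hy
  set u : ℝ := -Real.log x with hu
  set t : ℝ := -Real.log y with htdef
  have hxpos := hx.1
  have hypos := hy.1
  have hut : U ≤ u := by
    have := Real.log_le_log hxpos hx.2
    rw [Real.log_exp] at this
    linarith
  have htpos : 0 ≤ t := by
    have := Real.log_nonpos (le_of_lt hypos) hy.2
    linarith
  have hex : Real.exp (-u) = x := by rw [hu, neg_neg, Real.exp_log hxpos]
  have hext : Real.exp (-(u + t)) = y * x := by
    rw [hu, htdef]
    rw [show -(-Real.log x + -Real.log y) = Real.log y + Real.log x by ring,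
      Real.exp_add, Real.exp_log hxpos, Real.exp_log hypos]
  have hb := hP u hut t htpos
  have hmem1 : x ∈ Set.Ioc (0:ℝ) 1 := ⟨hxpos, le_trans hx.2 (Real.exp_le_one_iff.mpr (by linarith))⟩
  have hmem2 : y * x ∈ Set.Ioc (0:ℝ) 1 :=
    ⟨mul_pos hypos hxpos, le_trans (mul_le_one₀ hy.2 (le_of_lt hxpos) hmem1.2) le_rfl⟩
  have p1 : (0:ℝ) < Lg x := lt_of_lt_of_le hm (hmle _ hmem1)
  have p2 : (0:ℝ) < Lg (y * x) := lt_of_lt_of_le hm (hmle _ hmem2)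
  have hlog : Real.log (Lg (y * x) / Lg x) ≤ δ * (t + 1) := by
    rw [Real.log_div p2.ne' p1.ne']
    have : hfun Lg (u + t) - hfun Lg u = Real.log (Lg (y * x)) - Real.log (Lg x) := by
      unfold hfun
      rw [hext, hex]
    rw [← this]
    exact le_trans (le_abs_self _) hb
  have hratio : Lg (y * x) / Lg x ≤ Real.exp (δ * (t + 1)) := by
    rw [← Real.exp_log (div_pos p2 p1)]
    exact Real.exp_le_exp.mpr hlog
  refine le_trans hratio (le_of_eq ?_)
  rw [show δ * (t + 1) = δ + δ * t by ring, Real.exp_add]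
  congr 1
  rw [Real.rpow_def_of_pos hypos]
  congr 1
  rw [htdef]; ring


set_option maxHeartbeats 2000000 in
theorem truncated_kernel_mse (α : ℝ) (hα : α ∈ Set.Ioo (-(1/2) : ℝ) (1/2)) (hα0 : α ≠ 0)
    (Lg : ℝ → ℝ)
    (hslow : ∀ t : ℝ, 0 < t →
      Tendsto (fun x => Lg (t * x) / Lg x) (nhdsWithin 0 (Set.Ioi 0)) (nhds 1))
    (hC1 : ContDiffOn ℝ 1 Lg (Set.Ioc (0 : ℝ) 1))
    (hpos : ∃ m : ℝ, 0 < m ∧ ∀ x ∈ Set.Ioc (0 : ℝ) 1, m ≤ Lg x)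
    (g : ℝ → ℝ) (hg : ∀ x ∈ Set.Ioc (0 : ℝ) 1, g x = x ^ α * Lg x) :
    Tendsto (fun ε : ℝ =>
        (∫ s in (0 : ℝ)..ε, (g s - g ε) ^ 2) /
          ((1 / (2 * α + 1) - 2 / (α + 1) + 1) * ε ^ (2 * α + 1) * (Lg ε) ^ 2))
      (nhdsWithin 0 (Set.Ioi 0)) (nhds 1) := by
  obtain ⟨m, hm, hmle⟩ := hpos
  obtain ⟨hα1, hα2⟩ := hα
  have hα1 : -(1/2:ℝ) < α := hα1
  have hcontLg : ContinuousOn Lg (Set.Ioc (0:ℝ) 1) := hC1.continuousOn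
  set δ : ℝ := (2*α+1)/4 with hδdef
  have hδ : 0 < δ := by rw [hδdef]; linarith
  have hq : (-1:ℝ) < 2*α - 2*δ := by rw [hδdef]; linarith
  have hptw : ∀ s : ℝ, 0 ≤ s →
      Tendsto (fun u => hfun Lg (u + s) - hfun Lg u) atTop (nhds 0) :=
    fun s hs => hfun_ptwise Lg hslow m hm hmle s hs
  have hcont := hfun_contOn Lg hcontLg m hm hmle
  have huct := hfun_uct Lg hptw hcont
  obtain ⟨U, hU0, hP⟩ := hfun_potter Lg huct δ hδ
  have hPot := ratio_potter Lg m hm hmle δ hδ U hU0 hP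
  set x0 : ℝ := Real.exp (-U) with hx0def
  have hx0pos : 0 < x0 := Real.exp_pos _
  have hx0le : x0 ≤ 1 := Real.exp_le_one_iff.mpr (by linarith)
  have hDCT : Tendsto (fun ε : ℝ =>
        ∫ y in Set.Ioo (0:ℝ) 1, (y ^ α * (Lg (y * ε) / Lg ε) - 1)^2)
      (nhdsWithin 0 (Set.Ioi 0)) (nhds (∫ y in Set.Ioo (0:ℝ) 1, (y ^ α - 1)^2)) := by
    have hmemIoc : ∀ {ε y : ℝ}, ε ∈ Set.Ioc (0:ℝ) 1 → y ∈ Set.Ioo (0:ℝ) 1 →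
        y * ε ∈ Set.Ioc (0:ℝ) 1 := by
      intro ε y hε hy
      constructor
      · exact mul_pos hy.1 hε.1
      · nlinarith [hy.2, hε.2, hy.1, hε.1]
    apply tendsto_integral_filter_of_dominated_convergence
      (fun y => 2 * Real.exp δ ^ 2 * y ^ (2*α - 2*δ) + 2)
    · -- measurability
      filter_upwards [Ioc_mem_nhdsGT_of_mem (Set.mem_Ico.mpr ⟨le_refl (0:ℝ), zero_lt_one⟩)]
        with ε hε
      apply ContinuousOn.aestronglyMeasurable _ measurableSet_Ioo
      have c1 : ContinuousOn (fun y : ℝ => y ^ α) (Set.Ioo (0:ℝ) 1) :=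
        fun y hy => (Real.continuousAt_rpow_const y α (Or.inl (ne_of_gt hy.1))).continuousWithinAt
      have c2 : ContinuousOn (fun y : ℝ => Lg (y * ε)) (Set.Ioo (0:ℝ) 1) := by
        apply hcontLg.comp ((continuous_mul_right ε).continuousOn)
        intro y hy
        exact hmemIoc hε hy
      exact (((c1.mul (c2.div_const _)).sub continuousOn_const).pow 2)
    · -- bound
      filter_upwards [Ioc_mem_nhdsGT_of_mem (Set.mem_Ico.mpr ⟨le_refl (0:ℝ), hx0pos⟩)]
        with ε hε
      rw [ae_restrict_iff' measurableSet_Ioo]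
      apply Eventually.of_forall
      intro y hy
      have hε1 : ε ∈ Set.Ioc (0:ℝ) 1 := ⟨hε.1, le_trans hε.2 hx0le⟩
      have hyIoc : y ∈ Set.Ioc (0:ℝ) 1 := ⟨hy.1, le_of_lt hy.2⟩
      have hr0 : 0 < Lg (y * ε) / Lg ε :=
        div_pos (lt_of_lt_of_le hm (hmle _ (hmemIoc hε1 hy)))
          (lt_of_lt_of_le hm (hmle _ hε1))
      have hrb : Lg (y * ε) / Lg ε ≤ Real.exp δ * y ^ (-δ) := hPot ε hε y hyIoc
      set A : ℝ := y ^ α * (Lg (y * ε) / Lg ε) with hA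
      have hA0 : 0 ≤ A := le_of_lt (mul_pos (Real.rpow_pos_of_pos hy.1 α) hr0)
      have hAb : A ≤ Real.exp δ * y ^ (α - δ) := by
        rw [hA]
        calc y ^ α * (Lg (y * ε) / Lg ε) ≤ y ^ α * (Real.exp δ * y ^ (-δ)) := by
              apply mul_le_mul_of_nonneg_left hrb (le_of_lt (Real.rpow_pos_of_pos hy.1 α))
          _ = Real.exp δ * y ^ (α - δ) := by
              rw [show α - δ = α + -δ by ring, Real.rpow_add hy.1]
              ring
      have hsq : A^2 ≤ Real.exp δ ^ 2 * y ^ (2*α - 2*δ) := by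
        have h1 : A^2 ≤ (Real.exp δ * y ^ (α - δ))^2 := by
          apply sq_le_sq' _ hAb
          have := (Real.exp_pos δ).le
          nlinarith [Real.rpow_pos_of_pos hy.1 (α - δ), Real.exp_pos δ]
        refine le_trans h1 (le_of_eq ?_)
        rw [mul_pow]
        congr 1
        rw [← Real.rpow_natCast (y ^ (α - δ)) 2, ← Real.rpow_mul hy.1.le]
        norm_num
        ring_nf
      rw [Real.norm_eq_abs, abs_of_nonneg (sq_nonneg _)]
      nlinarith [sq_nonneg (A + 1)]
    · -- integrability of the bound
      have i1 : IntervalIntegrable (fun y : ℝ => y ^ (2*α - 2*δ)) volume 0 1 :=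
        intervalIntegral.intervalIntegrable_rpow' hq
      have i1' : IntegrableOn (fun y : ℝ => y ^ (2*α - 2*δ)) (Set.Ioo (0:ℝ) 1) volume := by
        have := (intervalIntegrable_iff_integrableOn_Ioc_of_le zero_le_one).mp i1
        exact this.mono_set Set.Ioo_subset_Ioc_self
      have : IntegrableOn (fun y : ℝ => 2 * Real.exp δ ^ 2 * y ^ (2*α - 2*δ) + 2)
          (Set.Ioo (0:ℝ) 1) volume := by
        apply (i1'.const_mul _).add
        exact (integrableOn_const_iff (by simp)).mpr (Or.inr (by rw [Real.volume_Ioo]; exact ENNReal.ofReal_lt_top))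
      exact this
    · -- pointwise limit
      rw [ae_restrict_iff' measurableSet_Ioo]
      apply Eventually.of_forall
      intro y hy
      have h1 : Tendsto (fun ε : ℝ => Lg (y * ε) / Lg ε) (nhdsWithin 0 (Set.Ioi 0)) (nhds 1) :=
        hslow y hy.1
      have h2 : Continuous (fun r : ℝ => (y ^ α * r - 1)^2) := by continuity
      have := (h2.tendsto 1).comp h1
      simp only [Function.comp_def, mul_one] at this
      exact this
  have hJ : (∫ y in Set.Ioo (0:ℝ) 1, (y ^ α - 1)^2) = 1/(2*α+1) - 2/(α+1) + 1 := by
    have h2α : (-1:ℝ) < 2*α := by linarith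
    have hα' : (-1:ℝ) < α := by linarith
    rw [← MeasureTheory.integral_Ioc_eq_integral_Ioo,
      ← intervalIntegral.integral_of_le zero_le_one]
    have hcongr : ∫ y in (0:ℝ)..1, (y ^ α - 1)^2
        = ∫ y in (0:ℝ)..1, (y ^ (2*α) - 2 * y ^ α + 1) := by
      rw [intervalIntegral.integral_of_le zero_le_one,
        intervalIntegral.integral_of_le zero_le_one,
        MeasureTheory.integral_Ioc_eq_integral_Ioo,
        MeasureTheory.integral_Ioc_eq_integral_Ioo]
      apply MeasureTheory.setIntegral_congr_fun measurableSet_Ioo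
      intro y hy
      have : y ^ (2*α) = (y ^ α)^2 := by
        rw [← Real.rpow_natCast (y ^ α) 2, ← Real.rpow_mul hy.1.le]
        norm_num
        ring_nf
      simp only []
      rw [this]
      ring
    rw [hcongr]
    have i1 : IntervalIntegrable (fun y : ℝ => y ^ (2*α)) volume 0 1 :=
      intervalIntegral.intervalIntegrable_rpow' h2α
    have i2 : IntervalIntegrable (fun y : ℝ => 2 * y ^ α) volume 0 1 :=
      (intervalIntegral.intervalIntegrable_rpow' hα').const_mul 2
    have e1 : ∫ y in (0:ℝ)..1, y ^ (2*α) = 1/(2*α+1) := by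
      rw [integral_rpow (Or.inl h2α)]
      rw [Real.one_rpow, Real.zero_rpow (by linarith : 2*α+1 ≠ 0)]
      ring
    have e2 : ∫ y in (0:ℝ)..1, y ^ α = 1/(α+1) := by
      rw [integral_rpow (Or.inl hα')]
      rw [Real.one_rpow, Real.zero_rpow (by linarith : α+1 ≠ 0)]
      ring
    rw [intervalIntegral.integral_add (i1.sub i2) intervalIntegrable_const,
      intervalIntegral.integral_sub i1 i2,
      intervalIntegral.integral_const_mul, e1, e2]
    simp
    ring
  have hiden : ∀ ε ∈ Set.Ioc (0:ℝ) 1, (∫ s in (0:ℝ)..ε, (g s - g ε) ^ 2)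
      = ε ^ (2*α+1) * Lg ε ^ 2
        * ∫ y in Set.Ioo (0:ℝ) 1, (y ^ α * (Lg (y * ε) / Lg ε) - 1)^2 := by
    intro ε hε
    have hεpos := hε.1
    have hεne : ε ≠ 0 := ne_of_gt hεpos
    have hLgε : (0:ℝ) < Lg ε := lt_of_lt_of_le hm (hmle _ hε)
    have h1 : ∫ y in (0:ℝ)..1, (g (y * ε) - g ε)^2
        = ε⁻¹ • ∫ s in (0:ℝ)..ε, (g s - g ε)^2 := by
      have := intervalIntegral.integral_comp_mul_right (fun s => (g s - g ε)^2) hεne (a := 0) (b := 1)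
      simpa using this
    have h2 : (∫ s in (0:ℝ)..ε, (g s - g ε)^2) = ε * ∫ y in (0:ℝ)..1, (g (y * ε) - g ε)^2 := by
      rw [h1, smul_eq_mul, ← mul_assoc, mul_inv_cancel₀ hεne, one_mul]
    rw [h2, intervalIntegral.integral_of_le zero_le_one,
      MeasureTheory.integral_Ioc_eq_integral_Ioo]
    have h3 : ∫ y in Set.Ioo (0:ℝ) 1, (g (y * ε) - g ε)^2
        = ∫ y in Set.Ioo (0:ℝ) 1, (ε ^ α * Lg ε)^2 * (y ^ α * (Lg (y * ε) / Lg ε) - 1)^2 := by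
      apply MeasureTheory.setIntegral_congr_fun measurableSet_Ioo
      intro y hy
      simp only []
      have hyε : y * ε ∈ Set.Ioc (0:ℝ) 1 := by
        constructor
        · exact mul_pos hy.1 hεpos
        · nlinarith [hy.2, hε.2, hy.1, hεpos]
      rw [hg _ hyε, hg _ hε]
      rw [Real.mul_rpow hy.1.le hεpos.le]
      rw [← mul_pow]
      congr 1
      field_simp
    rw [h3, integral_const_mul]
    have hpow : (ε ^ α)^2 = ε ^ (2*α) := by
      rw [← Real.rpow_natCast (ε ^ α) 2, ← Real.rpow_mul hεpos.le]
      norm_num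
      ring_nf
    have hpow2 : ε ^ (2*α) * ε = ε ^ (2*α+1) := by
      rw [Real.rpow_add_one hεne]
    rw [mul_pow, hpow]
    rw [← hpow2]
    ring
  have hd1 : (0:ℝ) < 2*α+1 := by linarith
  have hd2 : (0:ℝ) < α+1 := by linarith
  have hsq : (0:ℝ) < α^2 := by
    rcases lt_or_gt_of_ne hα0 with h | h <;> nlinarith
  have hCalt : 1/(2*α+1) - 2/(α+1) + 1 = 2*α^2 / ((2*α+1)*(α+1)) := by
    field_simp
    ring
  have hCpos : (0:ℝ) < 1/(2*α+1) - 2/(α+1) + 1 := by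
    rw [hCalt]
    exact div_pos (by nlinarith) (by nlinarith)
  have hfinal := hDCT.div_const (1/(2*α+1) - 2/(α+1) + 1)
  rw [hJ, div_self (ne_of_gt hCpos)] at hfinal
  apply Tendsto.congr' _ hfinal
  filter_upwards [Ioc_mem_nhdsGT_of_mem (Set.mem_Ico.mpr ⟨le_refl (0:ℝ), hx0pos⟩)] with ε hε
  have hε1 : ε ∈ Set.Ioc (0:ℝ) 1 := ⟨hε.1, le_trans hε.2 hx0le⟩
  have hLgε : (0:ℝ) < Lg ε := lt_of_lt_of_le hm (hmle _ hε1)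
  have hεp : (0:ℝ) < ε ^ (2*α+1) := Real.rpow_pos_of_pos hε.1 _
  rw [hiden ε hε1]
  rw [div_eq_div_iff (ne_of_gt hCpos)
    (mul_ne_zero (mul_ne_zero (ne_of_gt hCpos) (ne_of_gt hεp)) (pow_ne_zero 2 (ne_of_gt hLgε)))]
  ring
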